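/- For β, λ > 0, define the map T(Δ) = (1/β) ln( (β/λ)(1 − e^{−λΔ}) ) for Δ > 0 such that the argument of ln exceeds 0. Then the backward recursion Δ_{N_D} = (1/β) ln(β/λ + 1), Δ_k = T(Δ_{k+1}), produces a sequence that is positive and non-increasing in k decreasing from N_D (i.e., Δ_k ≤ Δ_{k+1} for all k), provided each iterate remains positive. -/

import Mathlib

open Real

/-- The backward recursion `Δ_{N_D} = (1/β)ln(β/λ+1)`,
`Δ_k = (1/β)ln((β/λ)(1 - e^{-λΔ_{k+1}}))` produces inter-deployment durations that are
non-increasing in `k` (i.e. `Δ_k ≤ Δ_{k+1}`), provided each iterate remains positive. -/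
theorem stmt_15 (β lam : ℝ) (hβ : 0 < β) (hlam : 0 < lam)
    (N : ℕ) (Δ : ℕ → ℝ)
    (hlast : Δ N = (1 / β) * Real.log (β / lam + 1))
    (hrec : ∀ k, 1 ≤ k → k < N →
      Δ k = (1 / β) * Real.log ((β / lam) * (1 - Real.exp (-(lam * Δ (k + 1))))))
    (hpos : ∀ k, 1 ≤ k → k ≤ N → 0 < Δ k) :
    ∀ k, 1 ≤ k → k < N → Δ k ≤ Δ (k + 1) := by
  intro k hk1 hkN
  have hD : 0 < Δ (k + 1) := hpos (k + 1) (le_add_right hk1) hkN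
  set x : ℝ := (β / lam) * (1 - Real.exp (-(lam * Δ (k + 1)))) with hx
  have hβD : 0 < β * Δ (k + 1) := mul_pos hβ hD
  -- x ≤ exp (β * Δ (k+1))
  have hxle : x ≤ Real.exp (β * Δ (k + 1)) := by
    have h1 : 1 - Real.exp (-(lam * Δ (k + 1))) ≤ lam * Δ (k + 1) := by
      have := Real.add_one_le_exp (-(lam * Δ (k + 1)))
      linarith
    have h2 : x ≤ β * Δ (k + 1) := by
      have : (β / lam) * (1 - Real.exp (-(lam * Δ (k + 1)))) ≤
          (β / lam) * (lam * Δ (k + 1)) := by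
        apply mul_le_mul_of_nonneg_left h1 (le_of_lt (div_pos hβ hlam))
      calc x ≤ (β / lam) * (lam * Δ (k + 1)) := this
        _ = β * Δ (k + 1) := by field_simp
    have h3 : β * Δ (k + 1) ≤ Real.exp (β * Δ (k + 1)) := by
      have := Real.add_one_le_exp (β * Δ (k + 1)); linarith
    linarith
  have hx0 : 0 < x := by
    apply mul_pos (div_pos hβ hlam)
    have : Real.exp (-(lam * Δ (k + 1))) < 1 := by
      rw [Real.exp_lt_one_iff]
      nlinarith
    linarith
  have hlog : Real.log x ≤ β * Δ (k + 1) :=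
    (Real.log_le_iff_le_exp hx0).mpr hxle
  have := hrec k hk1 hkN
  rw [this, ← hx]
  calc (1 / β) * Real.log x ≤ (1 / β) * (β * Δ (k + 1)) := by
        apply mul_le_mul_of_nonneg_left hlog
        positivity
    _ = Δ (k + 1) := by field_simp
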